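/- Let X be a separable LOTS, F the cdf of a probability Borel measure μ, and G its pseudo-inverse. Then μ({x}) = 0 for all x ∈ X if and only if G is injective (on its domain of definition). -/

import Mathlib

open MeasureTheory

private lemma stmt17_aux {X : Type*} [LinearOrder X] [TopologicalSpace X] [OrderTopology X]
    [TopologicalSpace.SeparableSpace X] [MeasurableSpace X] [BorelSpace X]
    (μ : Measure X) [IsProbabilityMeasure μ] (hatom : ∀ x : X, μ {x} = 0)
    {r s : ℝ} (hr0 : 0 ≤ r) (hs1 : s ≤ 1) {g : X}
    (hgr : IsGLB {y : X | r ≤ (μ (Set.Iic y)).toReal} g)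
    (hgs : IsGLB {y : X | s ≤ (μ (Set.Iic y)).toReal} g)
    (hrs : r < s) : False := by
  obtain ⟨D, hDc, hDd⟩ := TopologicalSpace.exists_countable_dense X
  have hfin : ∀ A : Set X, μ A ≠ ⊤ := fun A => measure_ne_top μ A
  -- Step 1: values of F below g are < r
  have h1 : ∀ y, y < g → (μ (Set.Iic y)).toReal < r := by
    intro y hy
    by_contra hcon
    push_neg at hcon
    exact absurd (hgr.1 hcon) (not_le.mpr hy)
  -- Step 5: values of F above g are ≥ s
  have h5 : ∀ y, g < y → s ≤ (μ (Set.Iic y)).toReal := by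
    intro y hy
    have : ¬ y ∈ lowerBounds {y : X | s ≤ (μ (Set.Iic y)).toReal} := by
      intro hmem
      exact absurd (hgs.2 hmem) (not_le.mpr hy)
    simp only [lowerBounds, Set.mem_setOf_eq, not_forall] at this
    obtain ⟨z, hz, hyz⟩ := this
    push_neg at hyz
    calc s ≤ (μ (Set.Iic z)).toReal := hz
      _ ≤ (μ (Set.Iic y)).toReal :=
        ENNReal.toReal_mono (hfin _) (measure_mono (Set.Iic_subset_Iic.mpr hyz.le))
  -- Step 2: μ (Iio g) ≤ ofReal r
  have h2 : μ (Set.Iio g) ≤ ENNReal.ofReal r := by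
    have hlt : ∀ y, y < g → μ (Set.Iic y) ≤ ENNReal.ofReal r := by
      intro y hy
      rw [← ENNReal.ofReal_toReal (hfin (Set.Iic y))]
      exact ENNReal.ofReal_le_ofReal (h1 y hy).le
    by_cases hmax : ∃ p, p < g ∧ ∀ y, y < g → y ≤ p
    · obtain ⟨p, hp, hpmax⟩ := hmax
      have : Set.Iio g = Set.Iic p := by
        ext x
        simp only [Set.mem_Iio, Set.mem_Iic]
        exact ⟨fun h => hpmax x h, fun h => lt_of_le_of_lt h hp⟩
      rw [this]; exact hlt p hp
    · push_neg at hmax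
      rcases Set.eq_empty_or_nonempty (Set.Iio g) with he | ⟨y0, hy0⟩
      · rw [he]; simp
      · -- no max: D ∩ Iio g is cofinal
        have hcof : ∀ y, y < g → ∃ d ∈ D ∩ Set.Iio g, y < d := by
          intro y hy
          obtain ⟨z, hzg, hyz⟩ := hmax y hy
          obtain ⟨d, hdD, hd⟩ := hDd.exists_mem_open isOpen_Ioo ⟨z, hyz, hzg⟩
          exact ⟨d, ⟨hdD, hd.2⟩, hd.1⟩
        have hctble : (D ∩ Set.Iio g).Countable := hDc.mono Set.inter_subset_left
        haveI := hctble.to_subtype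
        have hunion : Set.Iio g = ⋃ d : ↥(D ∩ Set.Iio g), Set.Iic (d : X) := by
          ext x
          simp only [Set.mem_Iio, Set.mem_iUnion, Set.mem_Iic]
          constructor
          · intro hx
            obtain ⟨d, hd, hxd⟩ := hcof x hx
            exact ⟨⟨d, hd⟩, hxd.le⟩
          · rintro ⟨⟨d, hd⟩, hxd⟩
            exact lt_of_le_of_lt hxd hd.2
        have hdir : Directed (· ⊆ ·) (fun d : ↥(D ∩ Set.Iio g) => Set.Iic (d : X)) := by
          intro d₁ d₂
          rcases le_total (d₁ : X) d₂ with h | h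
          · exact ⟨d₂, Set.Iic_subset_Iic.mpr h, le_refl _⟩
          · exact ⟨d₁, le_refl _, Set.Iic_subset_Iic.mpr h⟩
        rw [hunion, hdir.measure_iUnion]
        exact iSup_le fun d => hlt d d.2.2
  -- Step 3/4: F(g) ≤ r
  have h3 : μ (Set.Iic g) ≤ ENNReal.ofReal r := by
    have : Set.Iic g = Set.Iio g ∪ {g} := by
      ext x; simp [le_iff_lt_or_eq]
    rw [this]
    calc μ (Set.Iio g ∪ {g}) ≤ μ (Set.Iio g) + μ {g} := measure_union_le _ _
      _ = μ (Set.Iio g) := by rw [hatom g, add_zero]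
      _ ≤ ENNReal.ofReal r := h2
  have h4 : (μ (Set.Iic g)).toReal ≤ r := by
    calc (μ (Set.Iic g)).toReal ≤ (ENNReal.ofReal r).toReal :=
          ENNReal.toReal_mono ENNReal.ofReal_ne_top h3
      _ = r := ENNReal.toReal_ofReal hr0
  -- Step 6: derive contradiction
  by_cases hnmax : ∃ y, g < y
  · by_cases hsucc : ∃ g', g < g' ∧ ∀ y, g < y → g' ≤ y
    · obtain ⟨g', hg', hg'min⟩ := hsucc
      have hIoc : Set.Ioc g g' = {g'} := by
        ext x
        simp only [Set.mem_Ioc, Set.mem_singleton_iff]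
        exact ⟨fun ⟨h1', h2'⟩ => le_antisymm h2' (hg'min x h1'),
          fun h => by subst h; exact ⟨hg', le_refl _⟩⟩
      have hsplit : Set.Iic g' = Set.Iic g ∪ Set.Ioc g g' := by
        rw [Set.Iic_union_Ioc_eq_Iic hg'.le]
      have : μ (Set.Iic g') ≤ ENNReal.ofReal r := by
        rw [hsplit]
        calc μ (Set.Iic g ∪ Set.Ioc g g') ≤ μ (Set.Iic g) + μ (Set.Ioc g g') :=
              measure_union_le _ _
          _ = μ (Set.Iic g) := by rw [hIoc, hatom g', add_zero]
          _ ≤ ENNReal.ofReal r := h3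
      have hle : (μ (Set.Iic g')).toReal ≤ r := by
        calc (μ (Set.Iic g')).toReal ≤ (ENNReal.ofReal r).toReal :=
              ENNReal.toReal_mono ENNReal.ofReal_ne_top this
          _ = r := ENNReal.toReal_ofReal hr0
      exact absurd (h5 g' hg') (not_le.mpr (lt_of_le_of_lt hle hrs))
    · push_neg at hsucc
      obtain ⟨y1, hy1⟩ := hnmax
      -- no immediate successor: D ∩ Ioi g is coinitial
      have hcoi : ∀ y, g < y → ∃ d ∈ D ∩ Set.Ioi g, d < y := by
        intro y hy
        obtain ⟨z, hgz, hzy⟩ := hsucc y hy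
        obtain ⟨d, hdD, hd⟩ := hDd.exists_mem_open isOpen_Ioo ⟨z, hgz, hzy⟩
        exact ⟨d, ⟨hdD, hd.1⟩, hd.2⟩
      have hctble : (D ∩ Set.Ioi g).Countable := hDc.mono Set.inter_subset_left
      haveI := hctble.to_subtype
      have hne : Nonempty ↥(D ∩ Set.Ioi g) := by
        obtain ⟨d, hd, _⟩ := hcoi y1 hy1
        exact ⟨⟨d, hd⟩⟩
      have hinter : Set.Iic g = ⋂ d : ↥(D ∩ Set.Ioi g), Set.Iic (d : X) := by
        ext x
        simp only [Set.mem_Iic, Set.mem_iInter]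
        constructor
        · intro hx ⟨d, hd⟩
          exact le_trans hx hd.2.le
        · intro hx
          by_contra hc
          push_neg at hc
          obtain ⟨d, hd, hdx⟩ := hcoi x hc
          exact absurd (hx ⟨d, hd⟩) (not_le.mpr hdx)
      have hge : ENNReal.ofReal s ≤ μ (Set.Iic g) := by
        have hdir : Directed (· ⊇ ·) (fun d : ↥(D ∩ Set.Ioi g) => Set.Iic (d : X)) := by
          intro d₁ d₂
          rcases le_total (d₁ : X) d₂ with h | h
          · exact ⟨d₁, le_refl _, Set.Iic_subset_Iic.mpr h⟩
          · exact ⟨d₂, Set.Iic_subset_Iic.mpr h, le_refl _⟩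
        rw [hinter, Directed.measure_iInter
          (fun d => measurableSet_Iic.nullMeasurableSet) hdir ⟨hne.some, hfin _⟩]
        refine le_iInf fun d => ?_
        rw [← ENNReal.ofReal_toReal (hfin (Set.Iic (d : X)))]
        exact ENNReal.ofReal_le_ofReal (h5 d d.2.2)
      have : s ≤ (μ (Set.Iic g)).toReal := by
        have := ENNReal.toReal_mono (hfin _) hge
        rwa [ENNReal.toReal_ofReal (le_trans hr0 hrs.le)] at this
      linarith [h4]
  · -- g is maximal
    push_neg at hnmax
    have huniv : Set.Iic g = Set.univ := by
      ext x; simp [hnmax x]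
    have : (μ (Set.Iic g)).toReal = 1 := by
      rw [huniv, measure_univ]; simp
    linarith [h4]

theorem stmt17 {X : Type*} [LinearOrder X] [TopologicalSpace X] [OrderTopology X]
    [TopologicalSpace.SeparableSpace X] [MeasurableSpace X] [BorelSpace X]
    (μ : Measure X) [IsProbabilityMeasure μ] :
    (∀ x : X, μ {x} = 0) ↔
      ∀ r s : ℝ, r ∈ Set.Icc (0 : ℝ) 1 → s ∈ Set.Icc (0 : ℝ) 1 →
        ∀ g : X, IsGLB {y : X | r ≤ (μ (Set.Iic y)).toReal} g →
          IsGLB {y : X | s ≤ (μ (Set.Iic y)).toReal} g → r = s := by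
  constructor
  · intro hatom r s hrI hsI g hgr hgs
    rcases lt_trichotomy r s with h | h | h
    · exact absurd (stmt17_aux μ hatom hrI.1 hsI.2 hgr hgs h) id
    · exact h
    · exact absurd (stmt17_aux μ hatom hsI.1 hrI.2 hgs hgr h) id
  · intro hinj x
    by_contra hx
    have hxpos : 0 < μ {x} := (zero_le : 0 ≤ μ {x}).lt_of_ne (Ne.symm hx)
    have hfin : ∀ A : Set X, μ A ≠ ⊤ := fun A => measure_ne_top μ A
    set r := (μ (Set.Iic x)).toReal with hrdef
    set t := (μ (Set.Iio x)).toReal with htdef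
    have hsplit : μ (Set.Iic x) = μ (Set.Iio x) + μ {x} := by
      rw [← measure_union (by simp) (measurableSet_singleton x)]
      congr 1
      ext y; simp [le_iff_lt_or_eq]
    have htr : t < r := by
      rw [hrdef, htdef, hsplit, ENNReal.toReal_add (hfin _) (hfin _)]
      have : 0 < (μ {x}).toReal := ENNReal.toReal_pos (Ne.symm hxpos.ne) (hfin _)
      linarith
    set s := (t + r) / 2 with hsdef
    have hts : t < s := by rw [hsdef]; linarith
    have hsr : s < r := by rw [hsdef]; linarith
    have hr1 : r ≤ 1 := by
      rw [hrdef]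
      calc (μ (Set.Iic x)).toReal ≤ (μ Set.univ).toReal :=
            ENNReal.toReal_mono (hfin _) (measure_mono (Set.subset_univ _))
        _ = 1 := by simp
    have ht0 : 0 ≤ t := ENNReal.toReal_nonneg
    -- x is min of both S_r and S_s
    have hFmono : ∀ y, y < x → (μ (Set.Iic y)).toReal ≤ t := by
      intro y hy
      exact ENNReal.toReal_mono (hfin _) (measure_mono (fun z hz => lt_of_le_of_lt hz hy))
    have hglbr : IsGLB {y : X | r ≤ (μ (Set.Iic y)).toReal} x := by
      constructor
      · intro y hy
        by_contra hc
        push_neg at hc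
        exact absurd hy (not_le.mpr (lt_of_le_of_lt (hFmono y hc) (lt_trans hts hsr)))
      · intro b hb
        exact hb (le_refl r)
    have hglbs : IsGLB {y : X | s ≤ (μ (Set.Iic y)).toReal} x := by
      constructor
      · intro y hy
        by_contra hc
        push_neg at hc
        exact absurd hy (not_le.mpr (lt_of_le_of_lt (hFmono y hc) hts))
      · intro b hb
        exact hb hsr.le
    have := hinj r s ⟨le_trans ht0 (le_trans hts.le hsr.le), hr1⟩
      ⟨le_trans ht0 hts.le, le_trans hsr.le hr1⟩ x hglbr hglbs
    exact absurd this (ne_of_gt hsr)
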